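/- Let (A,B) be a coisotropic pair in (V,ω) and let k₁ = dim(A^ω ∩ B^ω), k₂ = dim A^ω, k₃ = dim B^ω, k₄ = (1/2) dim V, k₅ = dim(A^ω ∩ B) be its canonical invariants. Then 0 ≤ k₁ ≤ k₅ ≤ k₂ and k₁ + k₂ ≤ k₃ + k₅ ≤ k₁ + k₄. -/

import Mathlib

open Module

variable {V : Type*} [AddCommGroup V] [Module ℝ V]

/-- The symplectic orthogonal of a subspace `W`:
`{v ∈ V | ω v w = 0 for all w ∈ W}`. -/
def sorth (ω : LinearMap.BilinForm ℝ V) (W : Submodule ℝ V) : Submodule ℝ V where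
  carrier := {v | ∀ w ∈ W, ω v w = 0}
  add_mem' := by
    intro a b ha hb w hw
    simp only [Set.mem_setOf_eq] at *
    simp [ha w hw, hb w hw]
  zero_mem' := by intro w hw; simp
  smul_mem' := by
    intro c a ha w hw
    simp only [Set.mem_setOf_eq] at *
    simp [ha w hw]

/-- Two subspaces are `ω`-orthogonal. -/
def OrthSub (ω : LinearMap.BilinForm ℝ V) (E F : Submodule ℝ V) : Prop :=
  ∀ e ∈ E, ∀ f ∈ F, ω e f = 0

lemma sorth_eq_orthogonal (ω : LinearMap.BilinForm ℝ V) (hωalt : ω.IsAlt)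
    (W : Submodule ℝ V) : sorth ω W = ω.orthogonal W := by
  ext v
  constructor
  · intro hv w hw
    exact hωalt.isRefl v w (hv w hw)
  · intro hv w hw
    exact hωalt.isRefl w v (hv w hw)

lemma sorth_sup (ω : LinearMap.BilinForm ℝ V) (X Y : Submodule ℝ V) :
    sorth ω (X ⊔ Y) = sorth ω X ⊓ sorth ω Y := by
  ext v
  constructor
  · intro hv
    exact ⟨fun w hw => hv w (Submodule.mem_sup_left hw),
           fun w hw => hv w (Submodule.mem_sup_right hw)⟩
  · rintro ⟨h1, h2⟩ w hw
    rcases Submodule.mem_sup.1 hw with ⟨x, hx, y, hy, rfl⟩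
    simp [map_add, h1 x hx, h2 y hy]

lemma sorth_finrank [FiniteDimensional ℝ V] (ω : LinearMap.BilinForm ℝ V)
    (hω : ω.Nondegenerate) (hωalt : ω.IsAlt) (W : Submodule ℝ V) :
    finrank ℝ (sorth ω W) + finrank ℝ W = finrank ℝ V := by
  rw [sorth_eq_orthogonal ω hωalt, LinearMap.BilinForm.finrank_orthogonal hω]
  have : finrank ℝ W ≤ finrank ℝ V := W.finrank_le
  omega

lemma sorth_sorth [FiniteDimensional ℝ V] (ω : LinearMap.BilinForm ℝ V)
    (hω : ω.Nondegenerate) (hωalt : ω.IsAlt) (W : Submodule ℝ V) :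
    sorth ω (sorth ω W) = W := by
  rw [sorth_eq_orthogonal ω hωalt, sorth_eq_orthogonal ω hωalt]
  exact LinearMap.BilinForm.orthogonal_orthogonal hω hωalt.isRefl W

theorem canonical_invariants_inequalities [FiniteDimensional ℝ V]
    (ω : LinearMap.BilinForm ℝ V) (hω : ω.Nondegenerate) (hωalt : ω.IsAlt)
    (A B : Submodule ℝ V) (hA : sorth ω A ≤ A) (hB : sorth ω B ≤ B)
    (k₁ k₂ k₃ k₄ k₅ : ℕ)
    (hk₁ : k₁ = finrank ℝ (sorth ω A ⊓ sorth ω B : Submodule ℝ V))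
    (hk₂ : k₂ = finrank ℝ (sorth ω A))
    (hk₃ : k₃ = finrank ℝ (sorth ω B))
    (hk₄ : finrank ℝ V = 2 * k₄)
    (hk₅ : k₅ = finrank ℝ (sorth ω A ⊓ B : Submodule ℝ V)) :
    0 ≤ k₁ ∧ k₁ ≤ k₅ ∧ k₅ ≤ k₂ ∧ k₁ + k₂ ≤ k₃ + k₅ ∧ k₃ + k₅ ≤ k₁ + k₄ := by
  set Aw := sorth ω A with hAw
  set Bw := sorth ω B with hBw
  -- basic rewrites of the invariants
  have hsAB : sorth ω (A ⊔ B) = Aw ⊓ Bw := sorth_sup ω A B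
  have hsABw : sorth ω (A ⊔ Bw) = Aw ⊓ B := by
    rw [sorth_sup ω A Bw, hBw, sorth_sorth ω hω hωalt B]
  have hsAwB : sorth ω (Aw ⊔ B) = A ⊓ Bw := by
    rw [sorth_sup ω Aw B, hAw, sorth_sorth ω hω hωalt A]
  have hsinfAB : sorth ω (A ⊓ B) = Aw ⊔ Bw := by
    have : A ⊓ B = sorth ω (Aw ⊔ Bw) := by
      rw [sorth_sup ω Aw Bw, hAw, hBw, sorth_sorth ω hω hωalt A,
        sorth_sorth ω hω hωalt B]
    rw [this, sorth_sorth ω hω hωalt]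
  -- the coisotropic subspace C = (A ⊓ B) ⊔ Bw
  set C : Submodule ℝ V := (A ⊓ B) ⊔ Bw with hCdef
  have hsC : sorth ω C = (Aw ⊔ Bw) ⊓ B := by
    rw [hCdef, sorth_sup, hsinfAB, hBw, sorth_sorth ω hω hωalt B]
  have hCcois : sorth ω C ≤ C := by
    rw [hsC]
    rintro x ⟨hx1, hxB⟩
    rcases Submodule.mem_sup.1 hx1 with ⟨a, ha, b, hb, rfl⟩
    have hbB : b ∈ B := hB hb
    have haB : a ∈ B := by
      have : a = (a + b) - b := by abel
      rw [this]; exact Submodule.sub_mem B hxB hbB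
    exact Submodule.mem_sup.2 ⟨a, ⟨hA ha, haB⟩, b, hb, rfl⟩
  -- numerical facts
  have d1 : finrank ℝ (sorth ω (A ⊔ B)) + finrank ℝ (A ⊔ B : Submodule ℝ V)
      = finrank ℝ V := sorth_finrank ω hω hωalt _
  have d2 : finrank ℝ (sorth ω (A ⊔ Bw)) + finrank ℝ (A ⊔ Bw : Submodule ℝ V)
      = finrank ℝ V := sorth_finrank ω hω hωalt _
  have d3 : finrank ℝ (sorth ω (Aw ⊔ B)) + finrank ℝ (Aw ⊔ B : Submodule ℝ V)
      = finrank ℝ V := sorth_finrank ω hω hωalt _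
  have d4 : finrank ℝ Aw + finrank ℝ A = finrank ℝ V := sorth_finrank ω hω hωalt _
  have d5 : finrank ℝ Bw + finrank ℝ B = finrank ℝ V := sorth_finrank ω hω hωalt _
  have d6 : finrank ℝ (sorth ω C) + finrank ℝ C = finrank ℝ V :=
    sorth_finrank ω hω hωalt _
  rw [hsAB] at d1
  rw [hsABw] at d2
  rw [hsAwB] at d3
  -- coisotropy of C gives finrank (sorth C) ≤ finrank C
  have dC : finrank ℝ (sorth ω C) ≤ finrank ℝ C := Submodule.finrank_mono hCcois
  -- sup/inf dimension formulas
  have s1 : finrank ℝ (A ⊔ B : Submodule ℝ V) + finrank ℝ (A ⊓ B : Submodule ℝ V)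
      = finrank ℝ A + finrank ℝ B := Submodule.finrank_sup_add_finrank_inf_eq A B
  have s2 : finrank ℝ (A ⊔ Bw : Submodule ℝ V) + finrank ℝ (A ⊓ Bw : Submodule ℝ V)
      = finrank ℝ A + finrank ℝ Bw := Submodule.finrank_sup_add_finrank_inf_eq A Bw
  have s3 : finrank ℝ C + finrank ℝ ((A ⊓ B) ⊓ Bw : Submodule ℝ V)
      = finrank ℝ (A ⊓ B : Submodule ℝ V) + finrank ℝ Bw :=
    Submodule.finrank_sup_add_finrank_inf_eq (A ⊓ B) Bw
  have hinf : ((A ⊓ B) ⊓ Bw : Submodule ℝ V) = A ⊓ Bw := by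
    rw [inf_assoc, inf_eq_right.2 hB]
  rw [hinf] at s3
  -- monotonicity facts
  have m1 : finrank ℝ (Aw ⊓ Bw : Submodule ℝ V) ≤ finrank ℝ (Aw ⊓ B : Submodule ℝ V) :=
    Submodule.finrank_mono (inf_le_inf_left Aw hB)
  have m2 : finrank ℝ (Aw ⊓ B : Submodule ℝ V) ≤ finrank ℝ Aw :=
    Submodule.finrank_mono inf_le_left
  have m3 : finrank ℝ (Aw ⊔ B : Submodule ℝ V) ≤ finrank ℝ (A ⊔ B : Submodule ℝ V) :=
    Submodule.finrank_mono (sup_le_sup_right hA B)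
  omega
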